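/- Let X be a Banach space isometric to L_p(μ) for a measure space (Ω, S, μ) possessing an atom ω with μ({ω}) = 1, where 1 ≤ p < 2. Then there exists ε₀ > 0 such that for all 0 < ε < ε₀ there are no f, g ∈ L_p(μ) with (f,g) (1+ε)-equivalent to the canonical basis of ℓ_p² and 2^{1/p}·δ_ω = f + g, where δ_ω is the indicator function of {ω}. -/

import Mathlib

open MeasureTheory

/-- `(f, g)` is `K`-equivalent to the canonical basis of `ℓ_p²`. -/
def EquivLp2 {X : Type*} [NormedAddCommGroup X] [NormedSpace ℝ X]
    (p K : ℝ) (y₁ y₂ : X) : Prop :=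
  ∀ a b : ℝ, ¬(a = 0 ∧ b = 0) →
    K⁻¹ * (|a| ^ p + |b| ^ p) ^ (1 / p) < ‖a • y₁ + b • y₂‖ ∧
    ‖a • y₁ + b • y₂‖ < K * (|a| ^ p + |b| ^ p) ^ (1 / p)

lemma my_rpow_superadd {a b : ℝ} (ha : 0 ≤ a) (hb : 0 ≤ b) {p : ℝ} (hp1 : 1 ≤ p) :
    a ^ p + b ^ p ≤ (a + b) ^ p := by
  have h := NNReal.add_rpow_le_rpow_add a.toNNReal b.toNNReal hp1
  rw [← Real.toNNReal_add ha hb] at h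
  have h2 := NNReal.coe_le_coe.2 h
  rwa [NNReal.coe_add, NNReal.coe_rpow, NNReal.coe_rpow, NNReal.coe_rpow,
    Real.coe_toNNReal a ha, Real.coe_toNNReal b hb,
    Real.coe_toNNReal _ (add_nonneg ha hb)] at h2

set_option maxHeartbeats 2000000 in
theorem stmt16 {Ω : Type*} [MeasurableSpace Ω] (μ : Measure Ω)
    (p : ℝ) (hp1 : 1 ≤ p) (hp2 : p < 2) [Fact (1 ≤ ENNReal.ofReal p)]
    (ω : Ω) (hm : MeasurableSet ({ω} : Set Ω)) (hμ : μ {ω} = 1) :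
    ∃ ε₀ : ℝ, 0 < ε₀ ∧ ∀ ε : ℝ, 0 < ε → ε < ε₀ →
      ¬ ∃ f g : Lp ℝ (ENNReal.ofReal p) μ,
        EquivLp2 p (1 + ε) f g ∧
        ((2:ℝ) ^ (1/p)) • indicatorConstLp (ENNReal.ofReal p) hm
            (by rw [hμ]; exact ENNReal.one_ne_top) (1:ℝ) = f + g := by
  have hp0 : 0 < p := by linarith
  have h2p4 : (2:ℝ) ^ p < 4 := by
    have h := Real.rpow_lt_rpow_of_exponent_lt (by norm_num : (1:ℝ) < 2) hp2
    rwa [show ((2:ℝ) ^ (2:ℝ)) = 4 by rw [Real.rpow_two]; norm_num] at h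
  have h2p0 : (0:ℝ) < 2 ^ p := Real.rpow_pos_of_pos (by norm_num) p
  refine ⟨min 1 ((4 - 2 ^ p) / 60), lt_min one_pos (div_pos (by linarith) (by norm_num)), ?_⟩
  intro ε hε hεlt
  rintro ⟨f, g, heq, hsum⟩
  have hε1 : ε < 1 := lt_of_lt_of_le hεlt (min_le_left _ _)
  have hε60 : ε < (4 - 2 ^ p) / 60 := lt_of_lt_of_le hεlt (min_le_right _ _)
  have hq0 : (ENNReal.ofReal p) ≠ 0 := by
    simp only [ne_eq, ENNReal.ofReal_eq_zero, not_le]; exact hp0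
  have hqt : (ENNReal.ofReal p) ≠ ⊤ := ENNReal.ofReal_ne_top
  have hqr : (ENNReal.ofReal p).toReal = p := ENNReal.toReal_ofReal hp0.le
  set c : ℝ := (2:ℝ) ^ (1/p) with hc
  have hc0 : 0 < c := Real.rpow_pos_of_pos (by norm_num) _
  have hcp : c ^ p = 2 := by
    rw [hc, ← Real.rpow_mul (by norm_num : (0:ℝ) ≤ 2), one_div,
      inv_mul_cancel₀ hp0.ne', Real.rpow_one]
  -- norm inequalities from the equivalence
  have hone : (|(1:ℝ)| ^ p + |(0:ℝ)| ^ p) ^ (1/p) = 1 := by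
    rw [abs_one, abs_zero, Real.one_rpow, Real.zero_rpow hp0.ne', add_zero, Real.one_rpow]
  have hfn : ‖f‖ < 1 + ε := by
    have h := (heq 1 0 (by norm_num)).2
    rwa [hone, mul_one, one_smul, zero_smul, add_zero] at h
  have hgn : ‖g‖ < 1 + ε := by
    have h := (heq 0 1 (by norm_num)).2
    rwa [abs_zero, abs_one, Real.one_rpow, Real.zero_rpow hp0.ne', zero_add,
      Real.one_rpow, mul_one, one_smul, zero_smul, zero_add] at h
  have hfg : (1 + ε)⁻¹ * c < ‖f - g‖ := by
    have h := (heq 1 (-1) (by norm_num)).1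
    rwa [abs_one, abs_neg, abs_one, Real.one_rpow, one_smul, neg_one_smul,
      ← sub_eq_add_neg, show ((1:ℝ) + 1) = 2 by norm_num] at h
  -- measurable representatives
  obtain ⟨F, hFs, hFae⟩ := Lp.aestronglyMeasurable f
  obtain ⟨G, hGs, hGae⟩ := Lp.aestronglyMeasurable g
  -- restriction to the atom is a Dirac measure
  have hrd : μ.restrict {ω} = Measure.dirac ω := by
    refine Measure.ext fun A hA => ?_
    rw [Measure.restrict_apply hA, Measure.dirac_apply' _ hA]
    by_cases hωA : ω ∈ A
    · rw [Set.inter_eq_right.mpr (Set.singleton_subset_iff.mpr hωA), hμ,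
        Set.indicator_of_mem hωA]
      rfl
    · rw [Set.inter_singleton_eq_empty.mpr hωA, Set.indicator_of_notMem hωA,
        measure_empty]
  have atomInt : ∀ (φ : Ω → ℝ), StronglyMeasurable φ → ∫ x in {ω}, φ x ∂μ = φ ω := by
    intro φ hφ
    rw [hrd]
    exact integral_dirac' φ ω hφ
  set α : ℝ := F ω
  set β : ℝ := G ω
  -- the sum is the indicator
  have e : (⇑(f + g) : Ω → ℝ) =ᵐ[μ] Set.indicator {ω} (fun _ => c) := by
    rw [← hsum]
    refine (Lp.coeFn_smul _ _).trans ?_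
    filter_upwards [indicatorConstLp_coeFn (p := ENNReal.ofReal p) (hs := hm)
        (hμs := by rw [hμ]; exact ENNReal.one_ne_top) (c := (1:ℝ))] with x hx
    rw [Pi.smul_apply, hx]
    by_cases hx' : x ∈ ({ω} : Set Ω) <;> simp [hx']
  have hFG : (fun x => F x + G x) =ᵐ[μ] Set.indicator {ω} (fun _ => c) := by
    filter_upwards [Lp.coeFn_add f g, e, hFae, hGae] with x h1 h2 h3 h4
    rw [← h3, ← h4, ← h2, h1]
    rfl
  -- off the atom, G = -F
  have hGF : ∀ᵐ x ∂(μ.restrict {ω}ᶜ), G x = -F x := by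
    filter_upwards [ae_restrict_of_ae hFG, ae_restrict_mem hm.compl] with x hx hxc
    rw [Set.indicator_of_notMem hxc] at hx
    linarith
  -- α + β = c
  have hαβ : α + β = c := by
    have h := ae_restrict_of_ae hFG (s := {ω})
    rw [hrd] at h
    have h2 := integral_congr_ae h
    have hL : ∫ x, (F x + G x) ∂Measure.dirac ω = α + β :=
      integral_dirac' (fun x => F x + G x) ω (hFs.add hGs)
    have hR : ∫ x, Set.indicator {ω} (fun _ => c) x ∂Measure.dirac ω = c := by
      have h3 := integral_dirac' (Set.indicator {ω} fun _ => c) ω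
        (stronglyMeasurable_const.indicator hm)
      rwa [Set.indicator_of_mem (Set.mem_singleton ω)] at h3
    rw [hL, hR] at h2
    exact h2
  -- norm formula
  have normEq : ∀ (h : Lp ℝ (ENNReal.ofReal p) μ) (Φ : Ω → ℝ), ⇑h =ᵐ[μ] Φ →
      ‖h‖ ^ p = ∫ x, |Φ x| ^ p ∂μ := by
    intro h Φ hΦ
    have hmem := Lp.memLp h
    have e1 : ∫ x, ‖(h : Ω → ℝ) x‖ ^ p ∂μ = ∫ x, |Φ x| ^ p ∂μ :=
      integral_congr_ae (hΦ.mono fun x hx => by simp only [Real.norm_eq_abs, hx])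
    have hnn : 0 ≤ ∫ x, |Φ x| ^ p ∂μ :=
      integral_nonneg fun x => Real.rpow_nonneg (abs_nonneg _) p
    rw [Lp.norm_def, hmem.eLpNorm_eq_integral_rpow_norm hq0 hqt, hqr,
      ENNReal.toReal_ofReal (Real.rpow_nonneg (e1 ▸ hnn) _), e1]
    exact Real.rpow_inv_rpow hnn hp0.ne'
  -- integrability
  have intOf : ∀ (h : Lp ℝ (ENNReal.ofReal p) μ) (Φ : Ω → ℝ), ⇑h =ᵐ[μ] Φ →
      Integrable (fun x => |Φ x| ^ p) μ := by
    intro h Φ hΦ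
    have h1 := (Lp.memLp h).integrable_norm_rpow hq0 hqt
    rw [hqr] at h1
    exact h1.congr (hΦ.mono fun x hx => by simp only [Real.norm_eq_abs, hx])
  have intF := intOf f F hFae
  have intG := intOf g G hGae
  have hFGsub : ⇑(f - g) =ᵐ[μ] fun x => F x - G x := by
    filter_upwards [Lp.coeFn_sub f g, hFae, hGae] with x h1 h2 h3
    rw [h1, Pi.sub_apply, h2, h3]
  have intFG := intOf (f - g) _ hFGsub
  -- measurability of |·|^p images
  have habs : ∀ (H : Ω → ℝ), StronglyMeasurable H →
      StronglyMeasurable fun x => |H x| ^ p := by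
    intro H hH
    have e : (fun x => |H x| ^ p) = (fun y : ℝ => y ^ p) ∘ (fun x => ‖H x‖) := by
      funext x; simp [Real.norm_eq_abs]
    rw [e]
    exact (Real.continuous_rpow_const hp0.le).comp_stronglyMeasurable hH.norm
  have hFpm := habs F hFs
  have hGpm := habs G hGs
  have hFGpm := habs (fun x => F x - G x) (hFs.sub hGs)
  -- splitting
  set s : ℝ := ∫ x in {ω}ᶜ, |F x| ^ p ∂μ with hs
  have hs0 : 0 ≤ s := integral_nonneg fun x => Real.rpow_nonneg (abs_nonneg _) p
  have hsplitF : ∫ x, |F x| ^ p ∂μ = |α| ^ p + s := by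
    rw [← integral_add_compl hm intF, atomInt _ hFpm]
  have hsG : ∫ x in {ω}ᶜ, |G x| ^ p ∂μ = s := by
    refine integral_congr_ae (hGF.mono fun x hx => ?_)
    simp only [hx, abs_neg]
  have hsplitG : ∫ x, |G x| ^ p ∂μ = |β| ^ p + s := by
    rw [← integral_add_compl hm intG, atomInt _ hGpm, hsG]
  have hsFG : ∫ x in {ω}ᶜ, |F x - G x| ^ p ∂μ = 2 ^ p * s := by
    rw [hs, ← integral_const_mul]
    refine integral_congr_ae (hGF.mono fun x hx => ?_)
    simp only [hx, sub_neg_eq_add, ← two_mul, abs_mul, abs_two,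
      Real.mul_rpow (by norm_num : (0:ℝ) ≤ 2) (abs_nonneg (F x))]
  have hsplitFG : ∫ x, |F x - G x| ^ p ∂μ = |α - β| ^ p + 2 ^ p * s := by
    rw [← integral_add_compl hm intFG, atomInt _ hFGpm, hsFG]
  -- the three numeric inequalities
  set M : ℝ := (1 + ε) ^ p with hMdef
  have hM1 : 1 ≤ M := by
    calc (1:ℝ) = 1 ^ p := (Real.one_rpow p).symm
    _ ≤ (1 + ε) ^ p := Real.rpow_le_rpow zero_le_one (by linarith) hp0.le
  have hMpos : 0 < M := lt_of_lt_of_le one_pos hM1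
  have h1 : |α| ^ p + s < M := by
    rw [← hsplitF, ← normEq f F hFae]
    exact Real.rpow_lt_rpow (norm_nonneg f) hfn hp0
  have h2 : |β| ^ p + s < M := by
    rw [← hsplitG, ← normEq g G hGae]
    exact Real.rpow_lt_rpow (norm_nonneg g) hgn hp0
  have h3 : 2 / M < |α - β| ^ p + 2 ^ p * s := by
    rw [← hsplitFG, ← normEq (f - g) _ hFGsub]
    have h := Real.rpow_lt_rpow (by positivity) hfg hp0
    rwa [Real.mul_rpow (by positivity) hc0.le, hcp,
      Real.inv_rpow (by positivity), ← hMdef, inv_mul_eq_div] at h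
  -- endgame: real arithmetic
  set d : ℝ := |α - β| with hd
  have hd0 : 0 ≤ d := abs_nonneg _
  have key : ((c + d) / 2) ^ p + s < M := by
    rcases le_total β α with h | h
    · have hdv : d = α - β := abs_of_nonneg (by linarith)
      have hαv : α = (c + d) / 2 := by rw [hdv]; linarith
      have hα0 : 0 ≤ α := by rw [hαv]; positivity
      rw [← hαv, ← abs_of_nonneg hα0]; exact h1
    · have hdv : d = β - α := abs_of_nonpos (by linarith) |>.trans (neg_sub α β)
      have hβv : β = (c + d) / 2 := by rw [hdv]; linarith
      have hβ0 : 0 ≤ β := by rw [hβv]; positivity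
      rw [← hβv, ← abs_of_nonneg hβ0]; exact h2
  have keyM : (c + d) ^ p + 2 ^ p * s < 2 ^ p * M := by
    have e : (c + d) ^ p = 2 ^ p * ((c + d) / 2) ^ p := by
      rw [← Real.mul_rpow (by norm_num) (by positivity)]
      ring_nf
    rw [e]
    nlinarith [mul_lt_mul_of_pos_left key h2p0]
  have hsup : 2 + d ^ p ≤ (c + d) ^ p := by
    have h := my_rpow_superadd hc0.le hd0 hp1
    rwa [hcp] at h
  have hfinal : 2 + 2 / M < 2 ^ p * M := by linarith [h3, keyM, hsup]
  -- but for small ε this is impossible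
  have hM2 : M ≤ 1 + 3 * ε := by
    have h := Real.rpow_le_rpow_of_exponent_le (by linarith : 1 ≤ 1 + ε) hp2.le
    rw [Real.rpow_two] at h
    have h2 : ((1:ℝ) + ε) ^ 2 ≤ 1 + 3 * ε := by nlinarith
    rw [hMdef]
    exact h.trans h2
  have hb1 : 2 ^ p * M ≤ 2 ^ p + 12 * ε := by
    have t1 := mul_le_mul_of_nonneg_left hM2 h2p0.le
    have t2 : 3 * ε * 2 ^ p ≤ 3 * ε * 4 :=
      mul_le_mul_of_nonneg_left h2p4.le (by positivity)
    nlinarith [t1, t2]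
  have hb2 : 2 - 6 * ε ≤ 2 / M := by
    rw [le_div_iff₀ hMpos]
    rcases le_total (2 - 6 * ε) 0 with h' | h'
    · have t := mul_nonpos_of_nonpos_of_nonneg h' hMpos.le
      linarith
    · have t := mul_le_mul_of_nonneg_left hM2 h'
      nlinarith [sq_nonneg ε]
  have h60 : 60 * ε < 4 - 2 ^ p := by
    rw [lt_div_iff₀ (by norm_num)] at hε60
    linarith
  linarith [hfinal, hb1, hb2, h60, hε]
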